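/- arXiv:1510.06313 — 3 statements merged into one kernel-verified Lean document; each statement's English description precedes it below -/
import Mathlib

section
/- Let f : ℝ → ℂ be bounded by M and differentiable with derivative f'. If the mean values A = lim_{T→∞} (1/T) ∫_0^T f(x) exp(-iλx) dx and A' = lim_{T→∞} (1/T) ∫_0^T f'(x) exp(-iλx) dx both exist for a fixed real λ, then A' = iλ A. -/
open Filter MeasureTheory intervalIntegral

theorem meanValue_deriv (f f' : ℝ → ℂ) (M : ℝ) (l : ℝ) (A A' : ℂ)
    (hbd : ∀ x : ℝ, ‖f x‖ ≤ M)
    (hderiv : ∀ x : ℝ, HasDerivAt f (f' x) x)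
    (hloc : LocallyIntegrable f' volume)
    (hA : Tendsto (fun T : ℝ => (1 / T : ℂ) *
      ∫ x in (0:ℝ)..T, f x * Complex.exp (-(Complex.I * (l : ℂ) * (x : ℂ))))
      atTop (nhds A))
    (hA' : Tendsto (fun T : ℝ => (1 / T : ℂ) *
      ∫ x in (0:ℝ)..T, f' x * Complex.exp (-(Complex.I * (l : ℂ) * (x : ℂ))))
      atTop (nhds A')) :
    A' = Complex.I * (l : ℂ) * A := by
  set c : ℂ := -(Complex.I * (l : ℂ)) with hc
  set e : ℝ → ℂ := fun x => Complex.exp (c * x) with he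
  have hee : ∀ x : ℝ, Complex.exp (-(Complex.I * (l : ℂ) * (x : ℂ))) = e x := by
    intro x; simp only [he]; congr 1; rw [hc]; ring
  have hed : ∀ x : ℝ, HasDerivAt e (c * e x) x := by
    intro x
    have h1 : HasDerivAt (fun x : ℝ => c * (x : ℂ)) c x := by
      simpa using (Complex.ofRealCLM.hasDerivAt (x := x)).const_mul c
    simpa [he, mul_comm] using h1.cexp
  have hecont : Continuous e := by
    exact Complex.continuous_exp.comp (continuous_const.mul Complex.continuous_ofReal)
  have henorm : ∀ x : ℝ, ‖e x‖ = 1 := by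
    intro x
    simp [he, hc, Complex.norm_exp, Complex.mul_re,
      Complex.I_re, Complex.I_im, Complex.ofReal_re, Complex.ofReal_im]
  have hfc : Continuous f := by
    have : Differentiable ℝ f := fun x => (hderiv x).differentiableAt
    exact this.continuous
  -- integrability
  have hint1 : ∀ T : ℝ, IntervalIntegrable (fun x => f' x * e x) volume 0 T := by
    intro T
    exact ((hloc.integrableOn_isCompact isCompact_uIcc).intervalIntegrable).mul_continuousOn
      hecont.continuousOn
  have hint2 : ∀ T : ℝ, IntervalIntegrable (fun x => f x * (c * e x)) volume 0 T := by
    intro T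
    exact (hfc.mul (continuous_const.mul hecont)).intervalIntegrable 0 T
  -- integration by parts
  have key : ∀ T : ℝ, ∫ x in (0:ℝ)..T, f' x * e x
      = (f T * e T - f 0 * e 0) - ∫ x in (0:ℝ)..T, f x * (c * e x) := by
    intro T
    have hg : ∀ x ∈ Set.uIcc (0:ℝ) T,
        HasDerivAt (fun x => f x * e x) (f' x * e x + f x * (c * e x)) x := by
      intro x _
      exact (hderiv x).mul (hed x)
    have hgi : IntervalIntegrable (fun x => f' x * e x + f x * (c * e x)) volume 0 T :=
      (hint1 T).add (hint2 T)
    have := intervalIntegral.integral_eq_sub_of_hasDerivAt hg hgi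
    rw [intervalIntegral.integral_add (hint1 T) (hint2 T)] at this
    linear_combination this
  -- boundary term tends to 0
  have hM : 0 ≤ M := le_trans (norm_nonneg _) (hbd 0)
  have hbound : Tendsto (fun T : ℝ => (1 / T : ℂ) * (f T * e T - f 0 * e 0)) atTop (nhds 0) := by
    apply squeeze_zero_norm (a := fun T : ℝ => |1 / T| * (2 * M))
    · intro T
      rw [norm_mul]
      gcongr
      · rw [show ((1:ℂ)/T) = ((1/T : ℝ) : ℂ) by push_cast; ring, Complex.norm_real,
          Real.norm_eq_abs]
      · calc ‖f T * e T - f 0 * e 0‖ ≤ ‖f T * e T‖ + ‖f 0 * e 0‖ := norm_sub_le _ _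
          _ ≤ M + M := by
              rw [norm_mul, norm_mul, henorm, henorm, mul_one, mul_one]
              exact add_le_add (hbd T) (hbd 0)
          _ = 2 * M := by ring
    · have h0 : Tendsto (fun T : ℝ => |1 / T|) atTop (nhds 0) := by
        have := tendsto_one_div_atTop_nhds_zero_nat (𝕜 := ℝ)
        simpa using (tendsto_inv_atTop_zero : Tendsto (fun T : ℝ => T⁻¹) atTop (nhds 0)).abs.congr (fun T => rfl)
      simpa using h0.mul_const (2 * M)
  -- combine
  have hA2 : Tendsto (fun T : ℝ => (1 / T : ℂ) *
      ∫ x in (0:ℝ)..T, f' x * e x) atTop (nhds (-c * A)) := by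
    have : ∀ T : ℝ, (1 / T : ℂ) * ∫ x in (0:ℝ)..T, f' x * e x
        = (1 / T : ℂ) * (f T * e T - f 0 * e 0)
          + (-c) * ((1 / T : ℂ) * ∫ x in (0:ℝ)..T, f x * e x) := by
      intro T; rw [key T]
      have : ∫ x in (0:ℝ)..T, f x * (c * e x) = c * ∫ x in (0:ℝ)..T, f x * e x := by
        rw [← intervalIntegral.integral_const_mul]
        congr 1; ext x; ring
      rw [this]; ring
    simp only [this]
    have hA1 : Tendsto (fun T : ℝ => (1 / T : ℂ) * ∫ x in (0:ℝ)..T, f x * e x)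
        atTop (nhds A) := by simpa [hee] using hA
    simpa using hbound.add (hA1.const_mul (-c))
  have hA'1 : Tendsto (fun T : ℝ => (1 / T : ℂ) * ∫ x in (0:ℝ)..T, f' x * e x)
      atTop (nhds A') := by simpa [hee] using hA'
  have := tendsto_nhds_unique hA'1 hA2
  rw [this]; simp [hc]
end

section
/- Let f : ℝ → ℂ be (n+1)-times continuously differentiable, with f, f', …, f^{(n)} all bounded, and suppose C = lim sup_{T→∞} (1/T) ∫_0^T |f^{(n+1)}(x)| dx is finite. If for a nonzero real λ the Fourier coefficient A = lim_{T→∞} (1/T) ∫_0^T f(x) exp(-iλx) dx exists, then |A| ≤ C / |λ|^{n+1}. -/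
open Filter MeasureTheory intervalIntegral

private lemma expDeriv (l : ℝ) (x : ℝ) :
    HasDerivAt (fun x : ℝ => Complex.exp (-(Complex.I * (l : ℂ) * (x : ℂ))))
      (-(Complex.I * (l : ℂ)) * Complex.exp (-(Complex.I * (l : ℂ) * (x : ℂ)))) x := by
  have h0 : HasDerivAt (fun x : ℝ => (x : ℂ)) 1 x := Complex.ofRealCLM.hasDerivAt
  have h1 : HasDerivAt (fun x : ℝ => -(Complex.I * (l : ℂ) * (x : ℂ)))
      (-(Complex.I * (l : ℂ))) x := by
    exact (h0.const_mul (Complex.I * (l : ℂ))).neg.congr_deriv (by simp)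
  simpa [mul_comm] using h1.cexp

private lemma expNorm (l : ℝ) (x : ℝ) :
    ‖Complex.exp (-(Complex.I * (l : ℂ) * (x : ℂ)))‖ = 1 := by
  rw [Complex.norm_exp]
  simp [Complex.mul_re]

private lemma key (f : ℝ → ℂ) (n : ℕ) (l : ℝ) (A : ℂ)
    (hsmooth : ContDiff ℝ (n + 1) f)
    (hbd : ∀ k ≤ n, ∃ M : ℝ, ∀ x : ℝ, ‖iteratedDeriv k f x‖ ≤ M)
    (hA : Tendsto (fun T : ℝ => (1 / T : ℂ) *
      ∫ x in (0:ℝ)..T, f x * Complex.exp (-(Complex.I * (l : ℂ) * (x : ℂ))))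
      atTop (nhds A)) :
    ∀ k, k ≤ n + 1 → Tendsto (fun T : ℝ => (1 / T : ℂ) *
      ∫ x in (0:ℝ)..T, iteratedDeriv k f x * Complex.exp (-(Complex.I * (l : ℂ) * (x : ℂ))))
      atTop (nhds ((Complex.I * (l : ℂ)) ^ k * A)) := by
  intro k
  induction k with
  | zero => intro _; simpa using hA
  | succ k ih =>
    intro hk
    have hk' : k ≤ n := Nat.lt_succ_iff.mp hk
    have ihk := ih (le_trans hk' (Nat.le_succ n))
    -- derivative facts
    have hd : ∀ x : ℝ, HasDerivAt (iteratedDeriv k f) (iteratedDeriv (k + 1) f x) x := by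
      intro x
      have hdiff : Differentiable ℝ (iteratedDeriv k f) :=
        hsmooth.differentiable_iteratedDeriv k (by exact_mod_cast Nat.lt_succ_of_le hk')
      have := (hdiff x).hasDerivAt
      rwa [iteratedDeriv_succ, show deriv (iteratedDeriv k f) x
        = deriv (iteratedDeriv k f) x from rfl]
    have hcont : ∀ m : ℕ, m ≤ n + 1 → Continuous (iteratedDeriv m f) := by
      intro m hm
      exact hsmooth.continuous_iteratedDeriv m (by exact_mod_cast hm)
    have hcontE : Continuous (fun x : ℝ => Complex.exp (-(Complex.I * (l : ℂ) * (x : ℂ)))) := by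
      fun_prop
    -- integration by parts identity
    have hparts : ∀ T : ℝ,
        (∫ x in (0:ℝ)..T, iteratedDeriv (k + 1) f x
            * Complex.exp (-(Complex.I * (l : ℂ) * (x : ℂ))))
        = (iteratedDeriv k f T * Complex.exp (-(Complex.I * (l : ℂ) * (T : ℂ)))
            - iteratedDeriv k f 0)
          + (Complex.I * (l : ℂ)) * ∫ x in (0:ℝ)..T,
              iteratedDeriv k f x * Complex.exp (-(Complex.I * (l : ℂ) * (x : ℂ))) := by
      intro T
      have hu' : IntervalIntegrable (iteratedDeriv (k + 1) f) volume 0 T :=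
        (hcont (k + 1) (by omega)).intervalIntegrable _ _
      have hv' : IntervalIntegrable (fun x : ℝ => -(Complex.I * (l : ℂ))
          * Complex.exp (-(Complex.I * (l : ℂ) * (x : ℂ)))) volume 0 T :=
        (continuous_const.mul hcontE).intervalIntegrable _ _
      have h := integral_deriv_mul_eq_sub (u := iteratedDeriv k f)
        (v := fun x : ℝ => Complex.exp (-(Complex.I * (l : ℂ) * (x : ℂ))))
        (u' := iteratedDeriv (k + 1) f)
        (v' := fun x : ℝ => -(Complex.I * (l : ℂ))
          * Complex.exp (-(Complex.I * (l : ℂ) * (x : ℂ))))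
        (fun x _ => hd x) (fun x _ => expDeriv l x) hu' hv'
      have hi1 : IntervalIntegrable (fun x : ℝ => iteratedDeriv (k + 1) f x
          * Complex.exp (-(Complex.I * (l : ℂ) * (x : ℂ)))) volume 0 T :=
        ((hcont (k + 1) (by omega)).mul hcontE).intervalIntegrable _ _
      have hi2 : IntervalIntegrable (fun x : ℝ => iteratedDeriv k f x
          * (-(Complex.I * (l : ℂ)) * Complex.exp (-(Complex.I * (l : ℂ) * (x : ℂ)))))
          volume 0 T :=
        ((hcont k (by omega)).mul (continuous_const.mul hcontE)).intervalIntegrable _ _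
      have hsplit := intervalIntegral.integral_add hi1 hi2
      have h2 : (∫ x in (0:ℝ)..T, iteratedDeriv k f x
            * (-(Complex.I * (l : ℂ)) * Complex.exp (-(Complex.I * (l : ℂ) * (x : ℂ)))))
          = -(Complex.I * (l : ℂ)) * ∫ x in (0:ℝ)..T,
              iteratedDeriv k f x * Complex.exp (-(Complex.I * (l : ℂ) * (x : ℂ))) := by
        rw [← intervalIntegral.integral_const_mul]
        congr 1
        funext x
        ring
      rw [hsplit, h2] at h
      simp only [Complex.ofReal_zero, mul_zero, neg_zero, Complex.exp_zero, mul_one] at h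
      linear_combination h
    -- boundary term tends to 0
    obtain ⟨M, hM⟩ := hbd k hk'
    have h0 : Tendsto (fun T : ℝ => (1 / T : ℂ)) atTop (nhds 0) := by
      have : Tendsto (fun T : ℝ => (1 / T : ℝ)) atTop (nhds 0) := by
        simpa [one_div] using tendsto_inv_atTop_zero
      have := (Complex.continuous_ofReal.tendsto 0).comp this
      simpa [Function.comp_def, one_div] using this
    have hbound : Tendsto (fun T : ℝ => (1 / T : ℂ) *
        (iteratedDeriv k f T * Complex.exp (-(Complex.I * (l : ℂ) * (T : ℂ)))
          - iteratedDeriv k f 0)) atTop (nhds 0) := by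
      apply h0.zero_mul_isBoundedUnder_le
      refine isBoundedUnder_of ⟨M + ‖iteratedDeriv k f 0‖, fun T => ?_⟩
      calc ‖iteratedDeriv k f T * Complex.exp (-(Complex.I * (l : ℂ) * (T : ℂ)))
            - iteratedDeriv k f 0‖
          ≤ ‖iteratedDeriv k f T * Complex.exp (-(Complex.I * (l : ℂ) * (T : ℂ)))‖
            + ‖iteratedDeriv k f 0‖ := norm_sub_le _ _
        _ ≤ M + ‖iteratedDeriv k f 0‖ := by
            gcongr
            rw [norm_mul, expNorm, mul_one]
            exact hM T
    have hmain : Tendsto (fun T : ℝ => (Complex.I * (l : ℂ)) * ((1 / T : ℂ) *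
        ∫ x in (0:ℝ)..T, iteratedDeriv k f x
          * Complex.exp (-(Complex.I * (l : ℂ) * (x : ℂ)))))
        atTop (nhds ((Complex.I * (l : ℂ)) * ((Complex.I * (l : ℂ)) ^ k * A))) :=
      ihk.const_mul _
    have hsum := hbound.add hmain
    have heq : (fun T : ℝ => (1 / T : ℂ) *
        ∫ x in (0:ℝ)..T, iteratedDeriv (k + 1) f x
          * Complex.exp (-(Complex.I * (l : ℂ) * (x : ℂ))))
        = fun T : ℝ => (1 / T : ℂ) *
            (iteratedDeriv k f T * Complex.exp (-(Complex.I * (l : ℂ) * (T : ℂ)))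
              - iteratedDeriv k f 0)
          + (Complex.I * (l : ℂ)) * ((1 / T : ℂ) *
            ∫ x in (0:ℝ)..T, iteratedDeriv k f x
              * Complex.exp (-(Complex.I * (l : ℂ) * (x : ℂ)))) := by
      funext T
      rw [hparts T]
      ring
    rw [heq]
    have : (Complex.I * (l : ℂ)) ^ (k + 1) * A
        = 0 + (Complex.I * (l : ℂ)) * ((Complex.I * (l : ℂ)) ^ k * A) := by ring
    rw [this]
    exact hsum

theorem fourierCoeff_bound_iterated (f : ℝ → ℂ) (n : ℕ) (l : ℝ) (A : ℂ)
    (hsmooth : ContDiff ℝ (n + 1) f)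
    (hbd : ∀ k ≤ n, ∃ M : ℝ, ∀ x : ℝ, ‖iteratedDeriv k f x‖ ≤ M)
    (hfin : IsBoundedUnder (· ≤ ·) atTop
      (fun T : ℝ => (1 / T) * ∫ x in (0:ℝ)..T, ‖iteratedDeriv (n + 1) f x‖))
    (hl : l ≠ 0)
    (hA : Tendsto (fun T : ℝ => (1 / T : ℂ) *
      ∫ x in (0:ℝ)..T, f x * Complex.exp (-(Complex.I * (l : ℂ) * (x : ℂ))))
      atTop (nhds A)) :
    ‖A‖ ≤ (Filter.limsup
      (fun T : ℝ => (1 / T) * ∫ x in (0:ℝ)..T, ‖iteratedDeriv (n + 1) f x‖) atTop)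
      / |l| ^ (n + 1) := by
  set u : ℝ → ℂ := fun T => (1 / T : ℂ) *
    ∫ x in (0:ℝ)..T, iteratedDeriv (n + 1) f x
      * Complex.exp (-(Complex.I * (l : ℂ) * (x : ℂ))) with hu
  set v : ℝ → ℝ := fun T => (1 / T) * ∫ x in (0:ℝ)..T, ‖iteratedDeriv (n + 1) f x‖ with hv
  have hlim : Tendsto u atTop (nhds ((Complex.I * (l : ℂ)) ^ (n + 1) * A)) :=
    key f n l A hsmooth hbd hA (n + 1) le_rfl
  have hnorm : Tendsto (fun T => ‖u T‖) atTop (nhds (|l| ^ (n + 1) * ‖A‖)) := by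
    have := hlim.norm
    have heq : ‖(Complex.I * (l : ℂ)) ^ (n + 1) * A‖ = |l| ^ (n + 1) * ‖A‖ := by
      rw [norm_mul, norm_pow, norm_mul, Complex.norm_I, one_mul, Complex.norm_real,
        Real.norm_eq_abs]
    rwa [heq] at this
  have hev : ∀ᶠ T in atTop, ‖u T‖ ≤ v T := by
    filter_upwards [eventually_ge_atTop (0 : ℝ)] with T hT
    have h1 : ‖u T‖ = (1 / T) * ‖∫ x in (0:ℝ)..T, iteratedDeriv (n + 1) f x
        * Complex.exp (-(Complex.I * (l : ℂ) * (x : ℂ)))‖ := by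
      rw [hu]
      simp only [norm_mul, norm_div, norm_one, Complex.norm_real, Real.norm_eq_abs,
        abs_of_nonneg hT]
    rw [h1, hv]
    refine mul_le_mul_of_nonneg_left ?_ (by positivity)
    calc ‖∫ x in (0:ℝ)..T, iteratedDeriv (n + 1) f x
          * Complex.exp (-(Complex.I * (l : ℂ) * (x : ℂ)))‖
        ≤ ∫ x in (0:ℝ)..T, ‖iteratedDeriv (n + 1) f x
          * Complex.exp (-(Complex.I * (l : ℂ) * (x : ℂ)))‖ :=
          intervalIntegral.norm_integral_le_integral_norm hT
      _ = ∫ x in (0:ℝ)..T, ‖iteratedDeriv (n + 1) f x‖ := by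
          congr 1
          funext x
          rw [norm_mul, expNorm, mul_one]
  have hle : |l| ^ (n + 1) * ‖A‖ ≤ limsup v atTop := by
    have h1 : limsup (fun T => ‖u T‖) atTop = |l| ^ (n + 1) * ‖A‖ := hnorm.limsup_eq
    rw [← h1]
    exact limsup_le_limsup hev (hnorm.isBoundedUnder_ge.isCoboundedUnder_le) hfin
  have hpos : (0 : ℝ) < |l| ^ (n + 1) := by positivity
  rw [le_div_iff₀ hpos]
  linarith [hle]
end

section
/- Fix real x and integers N ≥ 2 and J ≥ 0, and let ζ_{x,N}(y) = ∑_{n=1}^{N} n^{-x} exp(-i y log n). Then lim sup_{T→∞} (1/T) ∫_0^T |d^{J+1}/dy^{J+1} ζ_{x,N}(y)| dy ≥ max_{2 ≤ n ≤ N} n^{-x} (log n)^{J+1}. -/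
open Filter MeasureTheory intervalIntegral

theorem truncatedZeta_avgBV_lower (x : ℝ) (N : ℕ) (hN : 2 ≤ N) (J : ℕ)
    (ζ : ℝ → ℂ)
    (hζ : ∀ y : ℝ, ζ y = ∑ n ∈ Finset.Icc 1 N,
      ((n : ℝ) ^ (-x) : ℝ) * Complex.exp (-(Complex.I * (y : ℂ) * (Real.log n : ℂ)))) :
    (Finset.Icc 2 N).sup' (Finset.nonempty_Icc.mpr hN)
        (fun n => (n : ℝ) ^ (-x) * (Real.log n) ^ (J + 1)) ≤
      Filter.limsup
        (fun T : ℝ => (1 / T) * ∫ y in (0:ℝ)..T, ‖iteratedDeriv (J + 1) ζ y‖)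
        atTop := by
  -- abbreviations
  set a : ℕ → ℂ := fun n => -(Complex.I * (Real.log n : ℂ)) with ha
  have hexp : ∀ (c : ℂ) (y : ℝ), HasDerivAt (fun y : ℝ => Complex.exp (c * y))
      (c * Complex.exp (c * y)) y := by
    intro c y
    have h1 : HasDerivAt (fun y : ℝ => (c * y : ℂ)) c y := by
      simpa using (Complex.ofRealCLM.hasDerivAt (x := y)).const_mul c
    simpa [mul_comm] using h1.cexp
  have key : ∀ k : ℕ, iteratedDeriv k ζ = fun y : ℝ =>
      ∑ n ∈ Finset.Icc 1 N, ((n : ℝ) ^ (-x) : ℝ) * (a n) ^ k * Complex.exp (a n * y) := by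
    intro k
    induction k with
    | zero =>
      funext y
      rw [iteratedDeriv_zero, hζ y]
      refine Finset.sum_congr rfl fun n _ => ?_
      rw [show -(Complex.I * (y : ℂ) * (Real.log n : ℂ)) = a n * y by rw [ha]; ring]
      ring
    | succ k ih =>
      rw [iteratedDeriv_succ, ih]
      funext y
      have hd : HasDerivAt (fun y : ℝ => ∑ n ∈ Finset.Icc 1 N,
          ((n : ℝ) ^ (-x) : ℝ) * (a n) ^ k * Complex.exp (a n * y))
          (∑ n ∈ Finset.Icc 1 N,
          ((n : ℝ) ^ (-x) : ℝ) * (a n) ^ k * (a n * Complex.exp (a n * y))) y :=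
        HasDerivAt.fun_sum fun n _ => (hexp (a n) y).const_mul _
      rw [hd.deriv]
      exact Finset.sum_congr rfl fun n _ => by ring
  set C : ℕ → ℂ := fun n => ((n : ℝ) ^ (-x) : ℝ) * (a n) ^ (J + 1) with hC
  set g : ℝ → ℂ := fun y => ∑ n ∈ Finset.Icc 1 N, C n * Complex.exp (a n * y) with hg
  have hkey : iteratedDeriv (J + 1) ζ = g := by
    rw [key (J + 1)]
  have hcont_exp : ∀ c : ℂ, Continuous (fun y : ℝ => Complex.exp (c * y)) :=
    fun c => Complex.continuous_exp.comp (continuous_const.mul Complex.continuous_ofReal)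
  have hgcont : Continuous g := by
    exact continuous_finset_sum _ fun n _ => continuous_const.mul (hcont_exp (a n))
  have hnorm_exp : ∀ (r : ℝ) (y : ℝ), ‖Complex.exp (Complex.I * (r:ℂ) * (y:ℂ))‖ = 1 := by
    intro r y
    rw [Complex.norm_exp]
    simp
  have hnorm_exp' : ∀ (n : ℕ) (y : ℝ), ‖Complex.exp (a n * y)‖ = 1 := by
    intro n y
    have : a n * (y:ℂ) = Complex.I * ((-Real.log n : ℝ):ℂ) * (y:ℂ) := by rw [ha]; push_cast; ring
    rw [this, hnorm_exp]
  -- bound on ‖g‖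
  set K2 : ℝ := ∑ n ∈ Finset.Icc 1 N, ‖C n‖ with hK2
  have hgbound : ∀ y : ℝ, ‖g y‖ ≤ K2 := by
    intro y
    rw [hg]
    refine (norm_sum_le _ _).trans ?_
    rw [hK2]
    refine Finset.sum_le_sum fun n _ => ?_
    rw [norm_mul, hnorm_exp' n y, mul_one]
  -- the function F in the statement, rewritten
  set F : ℝ → ℝ := fun T => (1 / T) * ∫ y in (0:ℝ)..T, ‖iteratedDeriv (J + 1) ζ y‖ with hF
  have hFg : F = fun T => (1 / T) * ∫ y in (0:ℝ)..T, ‖g y‖ := by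
    rw [hF, hkey]
  -- F is bounded above eventually
  have hFbdd : IsBoundedUnder (· ≤ ·) atTop F := by
    refine isBoundedUnder_of_eventually_le (a := K2) ?_
    filter_upwards [eventually_ge_atTop (1:ℝ)] with T hT
    have hT0 : (0:ℝ) < T := lt_of_lt_of_le one_pos hT
    rw [hFg]
    have h1 : (∫ y in (0:ℝ)..T, ‖g y‖) ≤ ∫ _ in (0:ℝ)..T, K2 := by
      apply intervalIntegral.integral_mono_on hT0.le
      · exact (hgcont.norm).intervalIntegrable _ _
      · exact intervalIntegrable_const
      · exact fun y _ => hgbound y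
    have h2 : (∫ _ in (0:ℝ)..T, K2) = T * K2 := by simp [mul_comm]
    calc (1 / T) * ∫ y in (0:ℝ)..T, ‖g y‖ ≤ (1 / T) * (T * K2) := by
          apply mul_le_mul_of_nonneg_left _ (by positivity)
          rw [← h2]; exact h1
      _ = K2 := by field_simp
  -- now fix m and prove the bound
  refine Finset.sup'_le _ _ fun m hm => ?_
  obtain ⟨hm2, hmN⟩ := Finset.mem_Icc.mp hm
  have hm1 : (1:ℝ) < m := by exact_mod_cast lt_of_lt_of_le one_lt_two (by exact_mod_cast hm2)
  have hlogm : 0 < Real.log m := Real.log_pos hm1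
  have hmmem : m ∈ Finset.Icc 1 N := Finset.mem_Icc.mpr ⟨le_trans one_le_two hm2, hmN⟩
  set b : ℕ → ℂ := fun n => Complex.I * ((Real.log m - Real.log n : ℝ) : ℂ) with hb
  have hbm : b m = 0 := by rw [hb]; simp
  have hbne : ∀ n ∈ (Finset.Icc 1 N).erase m, b n ≠ 0 := by
    intro n hn
    obtain ⟨hnm, hnmem⟩ := Finset.mem_erase.mp hn
    have hn1 : 1 ≤ n := (Finset.mem_Icc.mp hnmem).1
    have hlogne : Real.log m - Real.log n ≠ 0 := by
      intro h
      have : Real.log n = Real.log m := by linarith [sub_eq_zero.mp h]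
      have : (n:ℝ) = m := by
        have hn0 : (0:ℝ) < n := by exact_mod_cast hn1
        have hm0 : (0:ℝ) < m := by positivity
        exact Real.log_injOn_pos (Set.mem_Ioi.mpr hn0) (Set.mem_Ioi.mpr hm0) this
      exact hnm (by exact_mod_cast this)
    have : b n = Complex.I * ((Real.log m - Real.log n : ℝ) : ℂ) := by rw [hb]
    rw [this]
    exact mul_ne_zero Complex.I_ne_zero (Complex.ofReal_ne_zero.mpr hlogne)
  -- the twisted average Φ
  set Φ : ℝ → ℂ := fun T => (1 / (T:ℂ)) *
      ∫ y in (0:ℝ)..T, g y * Complex.exp (Complex.I * (Real.log m : ℂ) * y) with hΦ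
  -- integral computation
  have hint : ∀ T : ℝ, (∫ y in (0:ℝ)..T, g y * Complex.exp (Complex.I * (Real.log m : ℂ) * y))
      = C m * T + ∑ n ∈ (Finset.Icc 1 N).erase m,
          C n * ((Complex.exp (b n * T) - 1) / b n) := by
    intro T
    have h1 : (∫ y in (0:ℝ)..T, g y * Complex.exp (Complex.I * (Real.log m : ℂ) * y))
        = ∫ y in (0:ℝ)..T, ∑ n ∈ Finset.Icc 1 N, C n * Complex.exp (b n * y) := by
      apply intervalIntegral.integral_congr
      intro y _
      show g y * Complex.exp (Complex.I * (Real.log m : ℂ) * y)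
        = ∑ n ∈ Finset.Icc 1 N, C n * Complex.exp (b n * y)
      rw [hg]
      simp only
      rw [Finset.sum_mul]
      refine Finset.sum_congr rfl fun n _ => ?_
      rw [mul_assoc]
      rw [← Complex.exp_add]
      congr 1
      rw [ha, hb]; push_cast; ring
    rw [h1, intervalIntegral.integral_finset_sum (f := fun n y => C n * Complex.exp (b n * y))
      (fun n _ => ((continuous_const.mul (hcont_exp (b n))).intervalIntegrable _ _))]
    rw [← Finset.add_sum_erase _ _ hmmem]
    congr 1
    · rw [hbm]
      simp
      rw [hC]
      ring
    · refine Finset.sum_congr rfl fun n hn => ?_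
      rw [_root_.intervalIntegral.integral_const_mul,
        integral_exp_mul_complex (hbne n hn)]
      norm_num
  set K : ℝ := ∑ n ∈ (Finset.Icc 1 N).erase m, ‖C n‖ * (2 / ‖b n‖) with hK
  have herr : ∀ T : ℝ, 0 < T → ‖Φ T - C m‖ ≤ K / T := by
    intro T hT
    have hTne : (T:ℂ) ≠ 0 := Complex.ofReal_ne_zero.mpr hT.ne'
    have h1 : Φ T - C m = (1 / (T:ℂ)) * ∑ n ∈ (Finset.Icc 1 N).erase m,
        C n * ((Complex.exp (b n * T) - 1) / b n) := by
      simp only [hΦ]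
      rw [hint T]
      field_simp
      ring
    rw [h1, norm_mul]
    have h2 : ‖(1 / (T:ℂ))‖ = 1 / T := by
      rw [norm_div, norm_one, Complex.norm_real, Real.norm_eq_abs, abs_of_pos hT]
    rw [h2, div_eq_mul_one_div K T, mul_comm K (1/T)]
    apply mul_le_mul_of_nonneg_left _ (by positivity)
    refine (norm_sum_le _ _).trans ?_
    rw [hK]
    refine Finset.sum_le_sum fun n hn => ?_
    rw [norm_mul, norm_div]
    apply mul_le_mul_of_nonneg_left _ (norm_nonneg _)
    have he : ‖Complex.exp (b n * T) - 1‖ ≤ 2 := by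
      refine (norm_sub_le _ _).trans ?_
      have hbn : b n * (T:ℂ) = Complex.I * ((Real.log m - Real.log n : ℝ):ℂ) * (T:ℂ) := by
        rw [hb]
      rw [hbn, hnorm_exp, norm_one]; norm_num
    have hbpos : (0:ℝ) < ‖b n‖ := norm_pos_iff.mpr (hbne n hn)
    gcongr
  have hKT : Tendsto (fun T : ℝ => K / T) atTop (nhds 0) :=
    tendsto_const_nhds.div_atTop tendsto_id
  have htend0 : Tendsto (fun T => Φ T - C m) atTop (nhds 0) := by
    apply squeeze_zero_norm' ?_ hKT
    filter_upwards [eventually_gt_atTop (0:ℝ)] with T hT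
    exact herr T hT
  have hΦtend : Tendsto Φ atTop (nhds (C m)) := by
    have := htend0.add_const (C m)
    simpa using this
  have hnormtend : Tendsto (fun T => ‖Φ T‖) atTop (nhds ‖C m‖) := hΦtend.norm
  have hle : ∀ᶠ T in atTop, ‖Φ T‖ ≤ F T := by
    filter_upwards [eventually_gt_atTop (0:ℝ)] with T hT
    have h2 : ‖(1 / (T:ℂ))‖ = 1 / T := by
      rw [norm_div, norm_one, Complex.norm_real, Real.norm_eq_abs, abs_of_pos hT]
    calc ‖Φ T‖ = (1/T) * ‖∫ y in (0:ℝ)..T,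
          g y * Complex.exp (Complex.I * (Real.log m : ℂ) * y)‖ := by
          simp only [hΦ]; rw [norm_mul, h2]
      _ ≤ (1/T) * ∫ y in (0:ℝ)..T,
          ‖g y * Complex.exp (Complex.I * (Real.log m : ℂ) * y)‖ := by
          exact mul_le_mul_of_nonneg_left
            (intervalIntegral.norm_integral_le_integral_norm hT.le) (by positivity)
      _ = F T := by
          rw [hFg]
          congr 1
          apply intervalIntegral.integral_congr
          intro y _
          show ‖g y * _‖ = ‖g y‖
          rw [norm_mul, hnorm_exp, mul_one]
  have hlimsup : ‖C m‖ ≤ Filter.limsup F atTop := by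
    rw [← hnormtend.limsup_eq]
    exact Filter.limsup_le_limsup hle (hnormtend.isCoboundedUnder_le) hFbdd
  refine le_trans (le_of_eq ?_) hlimsup
  rw [hC]
  simp only
  rw [norm_mul, norm_pow, Complex.norm_real, Real.norm_eq_abs,
    abs_of_nonneg (Real.rpow_nonneg (Nat.cast_nonneg m) _), norm_neg, norm_mul,
    Complex.norm_I, one_mul, Complex.norm_real, Real.norm_eq_abs, abs_of_pos hlogm]
end
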